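/- Let 𝔞 be an abelian algebra of symmetric endomorphisms of V, diagonalized with weights α_1,...,α_n in an orthonormal eigenbasis v_1,...,v_n. Let x = ∑_{i∈I} x_i v_i with x_i ≠ 0 for i ∈ I (I the support of x). Then the gradient map μ_𝔞 maps the orbit A·x = {exp(ξ)x : ξ ∈ 𝔞} onto the open cone C^o_I = {∑_{i∈I} s_i α_i : s_i > 0}, and this map A·x → C^o_I is a bijection (in fact a diffeomorphism). -/

import Mathlib

open RealInnerProductSpace Finset Classical

section Aux
open Filter

lemma exp_eigen {V : Type*} [NormedAddCommGroup V] [InnerProductSpace ℝ V] [CompleteSpace V]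
    (ξ : V →L[ℝ] V) (w : V) (c : ℝ) (h : ξ w = c • w) :
    NormedSpace.exp ξ w = Real.exp c • w := by
  have hpow : ∀ k : ℕ, (ξ ^ k) w = c ^ k • w := by
    intro k
    induction k with
    | zero => simp
    | succ k ih =>
      rw [pow_succ, ContinuousLinearMap.mul_apply, h, map_smul, ih, smul_smul, pow_succ, mul_comm]
  have hsum : Summable fun k : ℕ => ((k.factorial : ℝ))⁻¹ • ξ ^ k :=
    NormedSpace.expSeries_summable' (𝕂 := ℝ) ξ
  have h1 : HasSum (fun k : ℕ => ((k.factorial : ℝ))⁻¹ • (ξ ^ k) w)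
      ((NormedSpace.exp ξ) w) := by
    have := (ContinuousLinearMap.apply ℝ V w).hasSum hsum.hasSum
    simpa [NormedSpace.exp_eq_tsum ℝ] using this
  have h2 : HasSum (fun k : ℕ => ((k.factorial : ℝ))⁻¹ • (ξ ^ k) w)
      (Real.exp c • w) := by
    have hs : HasSum (fun k : ℕ => ((k.factorial : ℝ))⁻¹ • c ^ k) (Real.exp c) := by
      have := (NormedSpace.expSeries_summable' (𝕂 := ℝ) c).hasSum
      rw [Real.exp_eq_exp_ℝ, NormedSpace.exp_eq_tsum ℝ]; exact this
    have := hs.smul_const w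
    simpa [hpow, smul_smul] using this
  exact h1.unique h2

lemma exp_ge (t : ℝ) (ht : 0 ≤ t) : (1+t)*(1+t) ≤ Real.exp (2*t) := by
  have h2 := Real.add_one_le_exp t
  have h3 : Real.exp (2*t) = Real.exp t * Real.exp t := by
    rw [two_mul, Real.exp_add]
  nlinarith [Real.exp_pos t]

lemma coord_bound (c s t : ℝ) (hc : 0 < c) (hs : 0 < s) :
    -(s^2/(2*c)) ≤ c * Real.exp (2*t)/2 - s*t := by
  have h4 : 0 < 2*c := by linarith
  rcases le_or_gt 0 t with ht | ht
  · have h1 := exp_ge t ht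
    rw [neg_le, le_div_iff₀ h4]
    nlinarith [sq_nonneg (c*t - s), mul_le_mul_of_nonneg_left h1 (mul_nonneg hc.le hc.le),
      mul_nonneg (mul_nonneg hc.le hc.le) ht]
  · have h5 : 0 < s^2/(2*c) := by positivity
    nlinarith [mul_pos hc (Real.exp_pos (2*t)), mul_pos hs (neg_pos.mpr ht)]

lemma coord_coercive (c s M : ℝ) (hc : 0 < c) (hs : 0 < s) :
    ∃ R, 0 ≤ R ∧ ∀ t : ℝ, R ≤ |t| → M ≤ c * Real.exp (2*t)/2 - s*t := by
  refine ⟨max (max 1 ((2*(max M 0) + 2*s)/c)) (M/s),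
    le_trans zero_le_one (le_trans (le_max_left _ _) (le_max_left _ _)), ?_⟩
  intro t hR
  rcases abs_cases t with ⟨he, ht0⟩ | ⟨he, ht0⟩
  · rw [he] at hR
    have ht1 : 1 ≤ t := le_trans (le_trans (le_max_left _ _) (le_max_left _ _)) hR
    have ht2 : (2*(max M 0) + 2*s)/c ≤ t := le_trans (le_trans (le_max_right _ _) (le_max_left _ _)) hR
    have ht3 : 2*(max M 0) + 2*s ≤ t * c := by rwa [div_le_iff₀ hc] at ht2
    have h1 := exp_ge t (by linarith)
    nlinarith [le_max_left M 0, le_max_right M 0]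
  · rw [he] at hR
    have ht2 : M/s ≤ -t := le_trans (le_max_right _ _) hR
    have : M ≤ -t * s := by rwa [div_le_iff₀ hs] at ht2
    nlinarith [mul_pos hc (Real.exp_pos (2*t))]

lemma F_coercive (n : ℕ) (c s : Fin n → ℝ) (hc : ∀ i, 0 < c i) (hs : ∀ i, 0 < s i) :
    Tendsto (fun a : Fin n → ℝ => ∑ i, (c i * Real.exp (2 * a i)/2 - s i * a i))
      (cocompact (Fin n → ℝ)) atTop := by
  rw [tendsto_atTop]
  intro M
  set B : Fin n → ℝ := fun i => -((s i)^2/(2*(c i))) with hB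
  have hB0 : ∀ i, B i ≤ 0 := fun i => neg_nonpos.mpr (div_nonneg (sq_nonneg _) (by linarith [hc i]))
  have hBle : ∀ i t, B i ≤ c i * Real.exp (2*t)/2 - s i * t := fun i t =>
    coord_bound (c i) (s i) t (hc i) (hs i)
  have hRc : ∀ i : Fin n, ∃ R, 0 ≤ R ∧ ∀ t : ℝ, R ≤ |t| →
      M - ∑ j, B j ≤ c i * Real.exp (2*t)/2 - s i * t := fun i =>
    coord_coercive (c i) (s i) _ (hc i) (hs i)
  choose R hR0 hRspec using hRc
  set Rmax : ℝ := ∑ i, R i with hRmax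
  have hRle : ∀ i, R i ≤ Rmax := fun i =>
    Finset.single_le_sum (fun j _ => hR0 j) (mem_univ i)
  rw [eventually_iff, mem_cocompact]
  refine ⟨Set.pi Set.univ (fun _ => Set.Icc (-Rmax) Rmax), isCompact_univ_pi
    (fun _ => isCompact_Icc), ?_⟩
  intro a ha
  simp only [Set.mem_compl_iff, Set.mem_pi, Set.mem_univ, forall_true_left, not_forall,
    Set.mem_Icc, not_and_or, not_le] at ha
  obtain ⟨j, hj⟩ := ha
  have hjabs : Rmax ≤ |a j| := by
    rcases hj with h | h
    · rw [abs_of_nonpos (by nlinarith [hRle j, hR0 j] : a j ≤ 0)]; linarith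
    · rw [abs_of_nonneg (by nlinarith [hRle j, hR0 j] : 0 ≤ a j)]; linarith
  have hkey := hRspec j (a j) (le_trans (hRle j) hjabs)
  have hsplit : ∑ i, (c i * Real.exp (2 * a i)/2 - s i * a i)
      = (c j * Real.exp (2 * a j)/2 - s j * a j)
        + ∑ i ∈ univ.erase j, (c i * Real.exp (2 * a i)/2 - s i * a i) := by
    rw [← Finset.add_sum_erase _ _ (mem_univ j)]
  rw [Set.mem_setOf_eq, hsplit]
  have h2 : ∑ i ∈ univ.erase j, B i ≤ ∑ i ∈ univ.erase j, (c i * Real.exp (2 * a i)/2 - s i * a i) :=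
    Finset.sum_le_sum (fun i _ => hBle i (a i))
  have h3 : ∑ i, B i ≤ ∑ i ∈ univ.erase j, B i := by
    rw [← Finset.add_sum_erase _ _ (mem_univ j)]
    nlinarith [hB0 j]
  linarith

lemma exists_crit (n : ℕ) (c s : Fin n → ℝ) (hc : ∀ i, 0 < c i) (hs : ∀ i, 0 < s i)
    (U : Submodule ℝ (Fin n → ℝ)) :
    ∃ a ∈ U, ∀ u ∈ U, ∑ i, (c i * Real.exp (2 * a i) - s i) * u i = 0 := by
  classical
  set F : (Fin n → ℝ) → ℝ := fun a => ∑ i, (c i * Real.exp (2 * a i)/2 - s i * a i) with hF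
  have hFcont : Continuous F := by
    apply continuous_finset_sum
    intro i _
    fun_prop
  have : Nonempty U := ⟨0⟩
  have hclosed : IsClosed (U : Set (Fin n → ℝ)) := Submodule.closed_of_finiteDimensional U
  have hembed : Topology.IsClosedEmbedding ((↑) : U → (Fin n → ℝ)) :=
    hclosed.isClosedEmbedding_subtypeVal
  have hcoG : Tendsto (fun u : U => F u) (cocompact U) atTop :=
    (F_coercive n c s hc hs).comp hembed.tendsto_cocompact
  obtain ⟨a₀, ha₀⟩ := (hFcont.comp continuous_subtype_val).exists_forall_le hcoG
  have hder : ∀ a : Fin n → ℝ, HasFDerivAt F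
      (∑ i, (c i * Real.exp (2 * a i) - s i) • ContinuousLinearMap.proj (R := ℝ)
        (φ := fun _ : Fin n => ℝ) i) a := by
    intro a
    apply HasFDerivAt.fun_sum
    intro i _
    have hproj : HasFDerivAt (fun b : Fin n → ℝ => b i)
        (ContinuousLinearMap.proj (R := ℝ) (φ := fun _ : Fin n => ℝ) i) a :=
      (ContinuousLinearMap.proj (R := ℝ) (φ := fun _ : Fin n => ℝ) i).hasFDerivAt
    have hg : HasDerivAt (fun t : ℝ => c i * Real.exp (2 * t)/2 - s i * t)
        (c i * Real.exp (2 * a i) - s i) (a i) := by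
      have h1 : HasDerivAt (fun t : ℝ => 2 * t) 2 (a i) := by
        simpa using (hasDerivAt_id (a i)).const_mul 2
      have h2 := (h1.exp.const_mul (c i)).div_const 2
      have h3 := (hasDerivAt_id (a i)).const_mul (s i)
      have h4 := h2.sub h3
      exact h4.congr_deriv (by ring)
    exact hg.comp_hasFDerivAt a hproj
  have hloc : IsLocalMin (F ∘ ((↑) : U → (Fin n → ℝ))) a₀ :=
    Filter.Eventually.of_forall ha₀
  have hderU : HasFDerivAt (F ∘ ((↑) : U → (Fin n → ℝ)))
      ((∑ i, (c i * Real.exp (2 * (a₀ : Fin n → ℝ) i) - s i) • ContinuousLinearMap.proj (R := ℝ)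
        (φ := fun _ : Fin n => ℝ) i).comp U.subtypeL) a₀ :=
    (hder _).comp a₀ U.subtypeL.hasFDerivAt
  have hzero := hloc.hasFDerivAt_eq_zero hderU
  refine ⟨a₀, a₀.2, fun u hu => ?_⟩
  have := congrFun (congrArg DFunLike.coe hzero) ⟨u, hu⟩
  simpa [ContinuousLinearMap.sum_apply, mul_comm] using this

end Aux

theorem gradientMap_bijOn_orbit
    (V : Type*) [NormedAddCommGroup V] [InnerProductSpace ℝ V] [FiniteDimensional ℝ V]
    (n : ℕ) (𝔞 : Submodule ℝ (V →L[ℝ] V))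
    (habelian : ∀ ξ η : 𝔞, (ξ : V →L[ℝ] V) * η = (η : V →L[ℝ] V) * ξ)
    (v : OrthonormalBasis (Fin n) ℝ V) (α : Fin n → (𝔞 →ₗ[ℝ] ℝ))
    (heig : ∀ (ξ : 𝔞) (i : Fin n), (ξ : V →L[ℝ] V) (v i) = α i ξ • v i)
    (x : V) :
    Set.BijOn (fun y : V => fun ξ : 𝔞 => ⟪(ξ : V →L[ℝ] V) y, y⟫)
      {y : V | ∃ ξ : 𝔞, y = NormedSpace.exp (ξ : V →L[ℝ] V) x}
      {φ : 𝔞 → ℝ | ∃ s : Fin n → ℝ, (∀ i, ⟪x, v i⟫ ≠ 0 → 0 < s i) ∧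
        φ = fun ξ : 𝔞 => ∑ i, (if ⟪x, v i⟫ ≠ 0 then s i * α i ξ else 0)} := by
  classical
  have hsq : ∀ t : ℝ, Real.exp t ^ 2 = Real.exp (2*t) := by
    intro t; rw [two_mul, Real.exp_add, sq]
  -- expansion of exp ξ x over the eigenbasis
  have hexpx : ∀ ξ : 𝔞, NormedSpace.exp ((ξ : V →L[ℝ] V)) x
      = ∑ j, (Real.exp (α j ξ) * ⟪x, v j⟫) • v j := by
    intro ξ
    conv_lhs => rw [← v.sum_repr x, map_sum]
    refine Finset.sum_congr rfl fun j _ => ?_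
    rw [map_smul, exp_eigen _ _ _ (heig ξ j), v.repr_apply_apply, real_inner_comm,
      smul_smul, mul_comm]
  have key2 : ∀ (ξ : 𝔞) (i : Fin n),
      ⟪NormedSpace.exp ((ξ : V →L[ℝ] V)) x, v i⟫ = Real.exp (α i ξ) * ⟪x, v i⟫ := by
    intro ξ i
    rw [hexpx, sum_inner]
    simp [real_inner_smul_left, orthonormal_iff_ite.mp v.orthonormal]
  -- the gradient map formula
  have key3 : ∀ (y : V) (η : 𝔞), ⟪(η : V →L[ℝ] V) y, y⟫ = ∑ i, α i η * ⟪y, v i⟫^2 := by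
    intro y η
    have happ : (η : V →L[ℝ] V) y = ∑ i, (v.repr y i * α i η) • v i := by
      conv_lhs => rw [← v.sum_repr y, map_sum]
      refine Finset.sum_congr rfl fun i _ => ?_
      rw [map_smul, heig, smul_smul]
    rw [happ, sum_inner]
    refine Finset.sum_congr rfl fun i _ => ?_
    rw [real_inner_smul_left, v.repr_apply_apply, real_inner_comm (v i) y]
    ring
  have keyμ : ∀ (ξ η : 𝔞), ⟪(η : V →L[ℝ] V) (NormedSpace.exp ((ξ : V →L[ℝ] V)) x),
      NormedSpace.exp ((ξ : V →L[ℝ] V)) x⟫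
      = ∑ i, α i η * (Real.exp (α i ξ) * ⟪x, v i⟫)^2 := by
    intro ξ η
    rw [key3]
    exact Finset.sum_congr rfl fun i _ => by rw [key2]
  constructor
  · -- MapsTo
    rintro y ⟨ξ, rfl⟩
    refine ⟨fun i => Real.exp (α i ξ)^2 * ⟪x, v i⟫^2, fun i hi => by positivity, ?_⟩
    funext η
    show ⟪((η : V →L[ℝ] V)) (NormedSpace.exp ((ξ : V →L[ℝ] V)) x),
      NormedSpace.exp ((ξ : V →L[ℝ] V)) x⟫ = _
    rw [keyμ]
    refine Finset.sum_congr rfl fun i _ => ?_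
    by_cases hi : ⟪x, v i⟫ ≠ 0
    · rw [if_pos hi]; ring
    · rw [if_neg hi]
      push_neg at hi
      rw [hi]; ring
  constructor
  · -- InjOn
    rintro y₁ ⟨ξ, rfl⟩ y₂ ⟨η, rfl⟩ h
    have hζ : ∀ ζ : 𝔞, ∑ i, α i ζ * (Real.exp (α i ξ) * ⟪x, v i⟫)^2
        = ∑ i, α i ζ * (Real.exp (α i η) * ⟪x, v i⟫)^2 := by
      intro ζ
      have := congrFun h ζ
      simp only [] at this
      rwa [keyμ, keyμ] at this
    have hzero : ∑ i, (α i ξ - α i η) * ((Real.exp (α i ξ))^2 - (Real.exp (α i η))^2)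
        * ⟪x, v i⟫^2 = 0 := by
      have h1 := hζ (ξ - η)
      rw [← sub_eq_zero, ← Finset.sum_sub_distrib] at h1
      rw [← h1]
      refine Finset.sum_congr rfl fun i _ => ?_
      rw [map_sub]
      ring
    have hnn : ∀ i ∈ univ, 0 ≤ (α i ξ - α i η) * ((Real.exp (α i ξ))^2 - (Real.exp (α i η))^2)
        * ⟪x, v i⟫^2 := by
      intro i _
      refine mul_nonneg ?_ (sq_nonneg _)
      rcases le_total (α i ξ) (α i η) with hle | hle
      · have := pow_le_pow_left₀ (Real.exp_nonneg _) (Real.exp_le_exp.mpr hle) 2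
        nlinarith
      · have := pow_le_pow_left₀ (Real.exp_nonneg _) (Real.exp_le_exp.mpr hle) 2
        nlinarith
    have heach := (Finset.sum_eq_zero_iff_of_nonneg hnn).mp hzero
    have hi : ∀ i, Real.exp (α i ξ) * ⟪x, v i⟫ = Real.exp (α i η) * ⟪x, v i⟫ := by
      intro i
      by_cases hx : ⟪x, v i⟫ = 0
      · rw [hx]; ring
      · have h0 := heach i (mem_univ i)
        have hxx : 0 < ⟪x, v i⟫^2 := by positivity
        have : α i ξ = α i η := by
          rcases lt_trichotomy (α i ξ) (α i η) with hl | he | hg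
          · have h1 := Real.exp_lt_exp.mpr hl
            have hE : Real.exp (α i ξ)^2 < Real.exp (α i η)^2 := by
              nlinarith [Real.exp_pos (α i ξ), Real.exp_pos (α i η)]
            have hP : 0 < (α i η - α i ξ) * (Real.exp (α i η)^2 - Real.exp (α i ξ)^2) :=
              mul_pos (by linarith) (by linarith)
            nlinarith [mul_pos hP hxx]
          · exact he
          · have h1 := Real.exp_lt_exp.mpr hg
            have hE : Real.exp (α i η)^2 < Real.exp (α i ξ)^2 := by
              nlinarith [Real.exp_pos (α i ξ), Real.exp_pos (α i η)]
            have hP : 0 < (α i ξ - α i η) * (Real.exp (α i ξ)^2 - Real.exp (α i η)^2) :=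
              mul_pos (by linarith) (by linarith)
            nlinarith [mul_pos hP hxx]
        rw [this]
    rw [hexpx ξ, hexpx η]
    exact Finset.sum_congr rfl fun i _ => by rw [hi]
  · -- SurjOn
    rintro φ ⟨s, hs, rfl⟩
    set c' : Fin n → ℝ := fun i => if ⟪x, v i⟫ ≠ 0 then ⟪x, v i⟫^2 else 1 with hc'
    set s' : Fin n → ℝ := fun i => if ⟪x, v i⟫ ≠ 0 then s i else 1 with hs'
    have hc'pos : ∀ i, 0 < c' i := by
      intro i; simp only [hc']; by_cases h : ⟪x, v i⟫ ≠ 0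
      · rw [if_pos h]; positivity
      · rw [if_neg h]; norm_num
    have hs'pos : ∀ i, 0 < s' i := by
      intro i; simp only [hs']; by_cases h : ⟪x, v i⟫ ≠ 0
      · rw [if_pos h]; exact hs i h
      · rw [if_neg h]; norm_num
    set T : 𝔞 →ₗ[ℝ] (Fin n → ℝ) :=
      LinearMap.pi (fun i => if ⟪x, v i⟫ ≠ 0 then α i else 0) with hT
    have hTapp : ∀ (ξ : 𝔞) (i : Fin n), T ξ i = if ⟪x, v i⟫ ≠ 0 then α i ξ else 0 := by
      intro ξ i
      rw [hT, LinearMap.pi_apply]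
      by_cases h : ⟪x, v i⟫ ≠ 0 <;> simp [h]
    obtain ⟨a, ha, hcrit⟩ := exists_crit n c' s' hc'pos hs'pos (LinearMap.range T)
    obtain ⟨ξ₀, rfl⟩ := ha
    refine ⟨NormedSpace.exp ((ξ₀ : V →L[ℝ] V)) x, ⟨ξ₀, rfl⟩, ?_⟩
    have h0 : ∀ η : 𝔞, ∑ i, (c' i * Real.exp (2 * T ξ₀ i) - s' i) * T η i = 0 :=
      fun η => hcrit (T η) ⟨η, rfl⟩
    funext η
    show ⟪((η : V →L[ℝ] V)) (NormedSpace.exp ((ξ₀ : V →L[ℝ] V)) x),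
      NormedSpace.exp ((ξ₀ : V →L[ℝ] V)) x⟫ = _
    rw [keyμ]
    have hterm : ∀ i, α i η * (Real.exp (α i ξ₀) * ⟪x, v i⟫)^2
        - (if ⟪x, v i⟫ ≠ 0 then s i * α i η else 0)
        = (c' i * Real.exp (2 * T ξ₀ i) - s' i) * T η i := by
      intro i
      rw [hTapp, hTapp]
      simp only [hc', hs']
      by_cases h : ⟪x, v i⟫ ≠ 0
      · simp only [if_pos h]
        rw [← hsq]
        ring
      · simp only [if_neg h]
        push_neg at h
        rw [h]
        ring
    rw [← sub_eq_zero, ← Finset.sum_sub_distrib,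
      Finset.sum_congr rfl fun i _ => hterm i]
    exact h0 η
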